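/- Let F ⊆ ℝ^m be nonempty closed convex, A ∈ ℝ^{m×n}, and suppose c ∈ ℝⁿ and τ ∈ ℝ^m satisfy, for some α, λ > 0: c = prox_{(1/α)‖·‖₁}(c − (λ/α)Aᵀτ) and τ = (I − P_F)(Ac + τ), where P_F is the projection onto F. Then Ac ∈ F and c minimizes ‖x‖₁ + ι_F(Ax) over x ∈ ℝⁿ. -/

import Mathlib

open scoped Matrix
open Finset

private lemma limit_aux {a b Q : ℝ} (hQ : 0 ≤ Q)
    (h : ∀ t : ℝ, 0 < t → t ≤ 1 → a ≤ b + t * Q) : a ≤ b := by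
  by_contra hab
  push_neg at hab
  have hε0 : 0 < a - b := by linarith
  have ht0 : 0 < min 1 ((a - b) / (2 * (Q + 1))) := by
    apply lt_min one_pos; positivity
  have h1 := h _ ht0 (min_le_left _ _)
  have h2 : min 1 ((a - b) / (2 * (Q + 1))) * Q ≤ (a - b) / 2 := by
    calc min 1 ((a - b) / (2 * (Q + 1))) * Q
        ≤ ((a - b) / (2 * (Q + 1))) * (Q + 1) :=
          mul_le_mul (min_le_right _ _) (by linarith) hQ (by positivity)
      _ = (a - b) / 2 := by field_simp
  linarith

/-- Fixed points of the proximity-operator system solve the model: if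
`c = prox_{(1/α)‖·‖₁}(c − (λ/α)Aᵀτ)` and `τ = (I − P_F)(Ac + τ)` for the
metric projection `P` onto a nonempty closed convex `F`, then `Ac ∈ F`
and `c` minimizes `‖x‖₁ + ι_F(Ax)`, i.e. `c` minimizes `‖·‖₁` among all
`x` with `Ax ∈ F`. -/
theorem prox_system_fixed_point_solves_model (m n : ℕ)
    (F : Set (Fin m → ℝ)) (hne : F.Nonempty) (hcl : IsClosed F) (hcv : Convex ℝ F)
    (A : Matrix (Fin m) (Fin n) ℝ) (α lam : ℝ) (hα : 0 < α) (hlam : 0 < lam)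
    (P : (Fin m → ℝ) → (Fin m → ℝ))
    (hP : ∀ u, P u ∈ F ∧ ∀ w ∈ F, ∑ i, (u i - P u i) ^ 2 ≤ ∑ i, (u i - w i) ^ 2)
    (c : Fin n → ℝ) (τ : Fin m → ℝ)
    (hc : ∀ w : Fin n → ℝ,
      (α / 2) * (∑ j, (c j - (c j - (lam / α) * (Aᵀ *ᵥ τ) j)) ^ 2) + ∑ j, |c j| ≤
      (α / 2) * (∑ j, (w j - (c j - (lam / α) * (Aᵀ *ᵥ τ) j)) ^ 2) + ∑ j, |w j|)
    (hτ : τ = (A *ᵥ c + τ) - P (A *ᵥ c + τ)) :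
    A *ᵥ c ∈ F ∧ ∀ x : Fin n → ℝ, A *ᵥ x ∈ F → ∑ j, |c j| ≤ ∑ j, |x j| := by
  -- The projection of `Ac + τ` is `Ac`
  have hPA : P (A *ᵥ c + τ) = A *ᵥ c := by
    funext i
    have h := congrFun hτ i
    simp only [Pi.sub_apply, Pi.add_apply] at h
    linarith
  have hAcF : A *ᵥ c ∈ F := hPA ▸ (hP (A *ᵥ c + τ)).1
  -- normal cone property: for all w ∈ F, ⟨τ, w - Ac⟩ ≤ 0
  have hncone : ∀ w ∈ F, ∑ i, τ i * (w i - (A *ᵥ c) i) ≤ 0 := by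
    intro w hw
    set Q : ℝ := ∑ i, (w i - (A *ᵥ c) i) ^ 2 with hQdef
    have hQ : 0 ≤ Q := Finset.sum_nonneg fun i _ => sq_nonneg _
    have := limit_aux (a := ∑ i, τ i * (w i - (A *ᵥ c) i)) (b := 0)
      (Q := Q / 2) (by positivity) ?_
    · simpa using this
    intro t ht0 ht1
    have hwt : (fun i => (A *ᵥ c) i + t * (w i - (A *ᵥ c) i)) ∈ F := by
      have h := hcv hAcF hw (by linarith : (0:ℝ) ≤ 1 - t) ht0.le (by ring)
      convert h using 1
      funext i
      simp [smul_eq_mul]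
      ring
    have h2 := (hP (A *ᵥ c + τ)).2 _ hwt
    rw [hPA] at h2
    have key : ∑ i, τ i ^ 2 ≤
        ∑ i, (τ i ^ 2 - 2 * t * (τ i * (w i - (A *ᵥ c) i)) + t ^ 2 * (w i - (A *ᵥ c) i) ^ 2) := by
      calc ∑ i, τ i ^ 2 = ∑ i, ((A *ᵥ c + τ) i - (A *ᵥ c) i) ^ 2 := by
            apply Finset.sum_congr rfl; intro i _; simp [Pi.add_apply]
        _ ≤ ∑ i, ((A *ᵥ c + τ) i - (fun i => (A *ᵥ c) i + t * (w i - (A *ᵥ c) i)) i) ^ 2 := h2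
        _ = _ := by
            apply Finset.sum_congr rfl; intro i _; simp only [Pi.add_apply]; ring
    have key2 : 2 * t * (∑ i, τ i * (w i - (A *ᵥ c) i)) ≤ t ^ 2 * Q := by
      have hsplit : ∑ i, (τ i ^ 2 - 2 * t * (τ i * (w i - (A *ᵥ c) i))
          + t ^ 2 * (w i - (A *ᵥ c) i) ^ 2)
          = (∑ i, τ i ^ 2) - 2 * t * (∑ i, τ i * (w i - (A *ᵥ c) i)) + t ^ 2 * Q := by
        rw [hQdef, Finset.mul_sum, Finset.mul_sum, ← Finset.sum_sub_distrib,
          ← Finset.sum_add_distrib]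
      rw [hsplit] at key
      linarith
    have htQ : t * ∑ i, τ i * (w i - (A *ᵥ c) i) ≤ t * (0 + t * (Q / 2)) := by
      nlinarith
    exact le_of_mul_le_mul_left htQ ht0
  refine ⟨hAcF, ?_⟩
  intro x hx
  -- inner product identity
  set D : ℝ := ∑ j, (Aᵀ *ᵥ τ) j * (x j - c j) with hDdef
  have hDD : D = ∑ i, τ i * ((A *ᵥ x) i - (A *ᵥ c) i) := by
    have h1 : (Aᵀ *ᵥ τ) ⬝ᵥ (x - c) = τ ⬝ᵥ (A *ᵥ (x - c)) := by
      rw [Matrix.mulVec_transpose, Matrix.dotProduct_mulVec]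
    simpa [dotProduct, Matrix.mulVec_sub, Pi.sub_apply, hDdef] using h1
  have hDneg : lam * D ≤ 0 := by
    have := hncone (A *ᵥ x) hx
    rw [hDD]
    exact mul_nonpos_of_nonneg_of_nonpos hlam.le this
  set K : ℝ := ∑ j, (x j - c j) ^ 2 with hKdef
  have hK : 0 ≤ K := Finset.sum_nonneg fun j _ => sq_nonneg _
  have step : ∑ j, |c j| ≤ (∑ j, |x j| + lam * D) := by
    apply limit_aux (Q := (α / 2) * K) (by positivity)
    intro t ht0 ht1
    have h1 := hc (fun j => c j + t * (x j - c j))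
    set Sg : ℝ := ∑ j, ((lam / α) * (Aᵀ *ᵥ τ) j) ^ 2 with hSgdef
    have hL : ∑ j, (c j - (c j - (lam / α) * (Aᵀ *ᵥ τ) j)) ^ 2 = Sg := by
      apply Finset.sum_congr rfl; intro j _; ring
    have hR : ∑ j, ((fun j => c j + t * (x j - c j)) j
        - (c j - (lam / α) * (Aᵀ *ᵥ τ) j)) ^ 2
        = t ^ 2 * K + 2 * t * (lam / α) * D + Sg := by
      rw [hKdef, hDdef, hSgdef, Finset.mul_sum, Finset.mul_sum, ← Finset.sum_add_distrib,
        ← Finset.sum_add_distrib]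
      apply Finset.sum_congr rfl; intro j _; ring
    rw [hL, hR] at h1
    have hg : (α / 2) * (t ^ 2 * K + 2 * t * (lam / α) * D + Sg)
        = (α / 2) * t ^ 2 * K + t * lam * D + (α / 2) * Sg := by
      field_simp
    rw [hg] at h1
    have hW : ∑ j, |c j + t * (x j - c j)| ≤ (1 - t) * ∑ j, |c j| + t * ∑ j, |x j| := by
      rw [Finset.mul_sum, Finset.mul_sum, ← Finset.sum_add_distrib]
      apply Finset.sum_le_sum
      intro j _
      calc |c j + t * (x j - c j)| = |(1 - t) * c j + t * x j| := by ring_nf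
        _ ≤ |(1 - t) * c j| + |t * x j| := abs_add_le _ _
        _ = (1 - t) * |c j| + t * |x j| := by
            rw [abs_mul, abs_mul, abs_of_nonneg (by linarith : (0:ℝ) ≤ 1 - t),
              abs_of_nonneg ht0.le]
    have hmul : t * (∑ j, |c j|) ≤ t * ((∑ j, |x j| + lam * D) + t * ((α / 2) * K)) := by
      nlinarith [h1, hW]
    exact le_of_mul_le_mul_left hmul ht0
  linarith
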